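/- Let H be a separable Hilbert space with an increasing sequence of finite-dimensional subspaces E_R = span{e_0, …, e_R} (where (e_j) is an orthonormal basis), and let (μ_R) be a projective family of finite Borel measures on the E_R (i.e. the pushforward of μ_{R+j} under the orthogonal projection E_{R+j} → E_R equals μ_R, and all have the same total mass m). Suppose there exist δ > 0 and K > 0 such that for every R and r ≥ 1, μ_R({f ∈ E_R : ‖f‖² ≥ r}) ≤ K (1+r)^{−δ}. Then the projective family extends to a countably additive Borel measure μ on H such that the pushforward of μ under the orthogonal projection onto E_R equals μ_R for every R. -/

import Mathlib

open MeasureTheory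


open MeasureTheory Filter Topology Set ENNReal

set_option linter.unusedSectionVars false
set_option linter.unusedVariables false

namespace Stmt6Aux

variable {E : Type*} [TopologicalSpace E] [MeasurableSpace E] [BorelSpace E]
  [CompactSpace E] [SecondCountableTopology E] [TopologicalSpace.PseudoMetrizableSpace E]
  [Nonempty E]

/-- Projection onto the first `R+1` coordinates. -/
def proj (E : Type*) (R : ℕ) : (ℕ → E) → (Fin (R + 1) → E) := fun x i => x i

lemma measurable_proj (R : ℕ) : Measurable (proj E R) :=
  measurable_pi_lambda _ fun i => measurable_pi_apply _

lemma continuous_proj (R : ℕ) : Continuous (proj E R) :=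
  continuous_pi fun i => continuous_apply _

lemma surjective_proj (R : ℕ) : Function.Surjective (proj E R) := by
  intro y
  refine ⟨fun n => if h : n < R + 1 then y ⟨n, h⟩ else Classical.arbitrary E, ?_⟩
  funext i
  simp [proj, i.isLt]

/-- Restriction between finite levels. -/
def restr {R S : ℕ} (h : R ≤ S) : (Fin (S + 1) → E) → (Fin (R + 1) → E) :=
  fun y i => y (Fin.castLE (Nat.succ_le_succ h) i)

lemma measurable_restr {R S : ℕ} (h : R ≤ S) : Measurable (restr (E := E) h) :=
  measurable_pi_lambda _ fun i => measurable_pi_apply _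

lemma restr_proj {R S : ℕ} (h : R ≤ S) : restr (E := E) h ∘ proj E S = proj E R := by
  funext x i
  simp [restr, proj]

lemma proj_preimage {R S : ℕ} (h : R ≤ S) (B : Set (Fin (R + 1) → E)) :
    proj E R ⁻¹' B = proj E S ⁻¹' (restr h ⁻¹' B) := by
  rw [← restr_proj (E := E) h, Set.preimage_comp]

lemma geo3 : (∑' k : ℕ, (2⁻¹ : ℝ≥0∞) ^ (k + 3)) = 4⁻¹ := by
  have h : ∀ k : ℕ, (2⁻¹ : ℝ≥0∞) ^ (k + 3) = 2⁻¹ ^ 3 * 2⁻¹ ^ k := fun k => by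
    rw [pow_add, mul_comm]
  rw [tsum_congr h, ENNReal.tsum_mul_left, ENNReal.tsum_geometric, ENNReal.one_sub_inv_two, inv_inv,
    ← ENNReal.inv_pow, show ((2 : ℝ≥0∞) ^ 3) = 4 * 2 by norm_num,
    ENNReal.mul_inv (by norm_num) (by norm_num), mul_assoc,
    ENNReal.inv_mul_cancel (by norm_num) (by norm_num), mul_one]

lemma geo1 : (∑' k : ℕ, (2⁻¹ : ℝ≥0∞) ^ (k + 1)) = 1 := by
  have h : ∀ k : ℕ, (2⁻¹ : ℝ≥0∞) ^ (k + 1) = 2⁻¹ ^ 1 * 2⁻¹ ^ k := fun k => by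
    rw [pow_add, mul_comm]
  rw [tsum_congr h, ENNReal.tsum_mul_left, ENNReal.tsum_geometric, ENNReal.one_sub_inv_two, inv_inv, pow_one,
    ENNReal.inv_mul_cancel (by norm_num) (by norm_num)]


variable (μt : (R : ℕ) → Measure (Fin (R + 1) → E))

/-- The outer content : infimum of values of measurable cylinders containing `s`. -/
noncomputable def mfun (s : Set (ℕ → E)) : ℝ≥0∞ :=
  ⨅ R : ℕ, ⨅ B : Set (Fin (R + 1) → E), ⨅ _ : MeasurableSet B, ⨅ _ : s ⊆ proj E R ⁻¹' B, μt R B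

lemma mfun_le {R : ℕ} {B : Set (Fin (R + 1) → E)} (hB : MeasurableSet B) {s : Set (ℕ → E)}
    (hs : s ⊆ proj E R ⁻¹' B) : mfun μt s ≤ μt R B := by
  refine le_trans (iInf_le _ R) ?_
  exact le_trans (iInf_le _ B) (le_trans (iInf_le _ hB) (iInf_le _ hs))

lemma mfun_mono {s t : Set (ℕ → E)} (hst : s ⊆ t) : mfun μt s ≤ mfun μt t := by
  refine le_iInf fun R => le_iInf fun B => le_iInf fun hB => le_iInf fun ht => ?_
  exact mfun_le μt hB (hst.trans ht)

lemma mfun_empty : mfun μt (∅ : Set (ℕ → E)) = 0 := by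
  refine le_antisymm ?_ zero_le
  refine le_trans (mfun_le μt (R := 0) MeasurableSet.empty (by simp)) (by simp)

variable (hcons : ∀ R S : ℕ, (h : R ≤ S) → (μt S).map (restr (E := E) h) = μt R)

section WithCons
include hcons

lemma restr_apply {R S : ℕ} (h : R ≤ S) {B : Set (Fin (R + 1) → E)} (hB : MeasurableSet B) :
    μt S (restr h ⁻¹' B) = μt R B := by
  rw [← hcons R S h, Measure.map_apply (measurable_restr h) hB]

lemma value_mono {R R' : ℕ} {B : Set (Fin (R + 1) → E)} {B' : Set (Fin (R' + 1) → E)}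
    (hB : MeasurableSet B) (hB' : MeasurableSet B')
    (hsub : proj E R ⁻¹' B ⊆ proj E R' ⁻¹' B') : μt R B ≤ μt R' B' := by
  set S := max R R' with hS
  rw [proj_preimage (le_max_left R R') B, proj_preimage (le_max_right R R') B'] at hsub
  have h2 : restr (E := E) (le_max_left R R') ⁻¹' B ⊆ restr (le_max_right R R') ⁻¹' B' := by
    intro y hy
    obtain ⟨x, rfl⟩ := surjective_proj (E := E) S y
    exact hsub hy
  rw [← restr_apply μt hcons (le_max_left R R') hB,
    ← restr_apply μt hcons (le_max_right R R') hB']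
  exact measure_mono h2

lemma mfun_cyl {R : ℕ} {B : Set (Fin (R + 1) → E)} (hB : MeasurableSet B) :
    mfun μt (proj E R ⁻¹' B) = μt R B := by
  refine le_antisymm (mfun_le μt hB subset_rfl) ?_
  refine le_iInf fun R' => le_iInf fun B' => le_iInf fun hB' => le_iInf fun hsub => ?_
  exact value_mono μt hcons hB hB' hsub

lemma exists_cyl_near (s : Set (ℕ → E)) {η : ℝ≥0∞} (hη : η ≠ 0) :
    ∃ (R : ℕ) (B : Set (Fin (R + 1) → E)), MeasurableSet B ∧ s ⊆ proj E R ⁻¹' B ∧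
      μt R B ≤ mfun μt s + η := by
  by_cases h : mfun μt s = ∞
  · exact ⟨0, Set.univ, MeasurableSet.univ, fun x _ => trivial, by rw [h]; simp⟩
  · have hlt : mfun μt s < mfun μt s + η := ENNReal.lt_add_right h hη
    conv_lhs at hlt => rw [mfun]
    simp only [iInf_lt_iff] at hlt
    obtain ⟨R, B, hB, hs, hlt⟩ := hlt
    exact ⟨R, B, hB, hs, hlt.le⟩

lemma mfun_union_le (s t : Set (ℕ → E)) :
    mfun μt (s ∪ t) ≤ mfun μt s + mfun μt t := by
  refine ENNReal.le_of_forall_pos_le_add fun ε hε h' => ?_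
  have hη : ((ε : ℝ≥0∞) / 2) ≠ 0 := by
    simp [ENNReal.div_eq_zero_iff, hε.ne']
  obtain ⟨R, B, hB, hsB, hvB⟩ := exists_cyl_near μt hcons s hη
  obtain ⟨R', B', hB', hsB', hvB'⟩ := exists_cyl_near μt hcons t hη
  set S := max R R'
  have h1 : proj E R ⁻¹' B = proj E S ⁻¹' (restr (le_max_left R R') ⁻¹' B) :=
    proj_preimage _ B
  have h2 : proj E R' ⁻¹' B' = proj E S ⁻¹' (restr (le_max_right R R') ⁻¹' B') :=
    proj_preimage _ B'
  have hsub : s ∪ t ⊆ proj E S ⁻¹' (restr (le_max_left R R') ⁻¹' B ∪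
      restr (le_max_right R R') ⁻¹' B') := by
    rw [Set.preimage_union, ← h1, ← h2]
    exact Set.union_subset_union hsB hsB'
  have step : mfun μt (s ∪ t) ≤ μt R B + μt R' B' := by
    refine le_trans (mfun_le μt (((measurable_restr _) hB).union
      ((measurable_restr _) hB')) hsub) ?_
    refine le_trans (measure_union_le _ _) ?_
    rw [restr_apply μt hcons _ hB, restr_apply μt hcons _ hB']
  calc mfun μt (s ∪ t) ≤ μt R B + μt R' B' := step
    _ ≤ (mfun μt s + ε / 2) + (mfun μt t + ε / 2) := add_le_add hvB hvB'
    _ = mfun μt s + mfun μt t + ε := by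
        rw [add_add_add_comm, ENNReal.add_halves]

lemma mfun_biUnion_le (g : ℕ → Set (ℕ → E)) (t : Finset ℕ) :
    mfun μt (⋃ k ∈ t, g k) ≤ ∑ k ∈ t, mfun μt (g k) := by
  classical
  induction t using Finset.induction_on with
  | empty => simp [mfun_empty μt]
  | insert a s hx ih =>
    rw [Finset.set_biUnion_insert, Finset.sum_insert hx]
    exact le_trans (mfun_union_le μt hcons _ _) (add_le_add_right ih _)


section Core
include hcons

lemma core_subadd (hfin : ∀ R, IsFiniteMeasure (μt R)) {R : ℕ} {B : Set (Fin (R + 1) → E)}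
    (hB : MeasurableSet B) (f : ℕ → ℕ) (Bs : ∀ n, Set (Fin (f n + 1) → E))
    (hBs : ∀ n, MeasurableSet (Bs n))
    (hcover : proj E R ⁻¹' B ⊆ ⋃ n, proj E (f n) ⁻¹' (Bs n)) :
    μt R B ≤ ∑' n, μt (f n) (Bs n) := by
  haveI := hfin
  set A : ℕ → Set (ℕ → E) := fun k => proj E (f k) ⁻¹' (Bs k) with hA
  set D : ℕ → Set (ℕ → E) := fun n => proj E R ⁻¹' B \ ⋃ k ∈ Finset.range (n + 1), A k with hD
  have key : (⨅ n, mfun μt (D n)) = 0 := by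
    by_contra hne
    set ε := ⨅ n, mfun μt (D n) with hε
    have hε0 : ε ≠ 0 := hne
    have hεtop : ε ≠ ∞ := by
      have h1 : ε ≤ mfun μt (D 0) := iInf_le _ 0
      have h2 : mfun μt (D 0) ≤ μt R B := by
        rw [← mfun_cyl μt hcons hB]; exact mfun_mono μt Set.diff_subset
      exact ((h1.trans h2).trans_lt (measure_lt_top _ _)).ne
    obtain ⟨C0, hC0sub, hC0closed, hC0⟩ := hB.exists_isClosed_diff_lt
      (measure_ne_top (μt R) B) (show ε * 4⁻¹ ≠ 0 from mul_ne_zero hε0 (by norm_num))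
    have hchoice : ∀ k, ∃ C, C ⊆ (Bs k)ᶜ ∧ IsClosed C ∧
        μt (f k) ((Bs k)ᶜ \ C) < ε * 2⁻¹ ^ (k + 3) := fun k =>
      ((hBs k).compl).exists_isClosed_diff_lt (measure_ne_top _ _)
        (mul_ne_zero hε0 (pow_ne_zero _ (by norm_num)))
    choose C hCsub hCclosed hCdef using hchoice
    set K : ℕ → Set (ℕ → E) := fun n =>
      proj E R ⁻¹' C0 ∩ ⋂ k ∈ Finset.range (n + 1), proj E (f k) ⁻¹' (C k) with hK
    have hKest : ∀ n, ε ≤ mfun μt (K n) + ε * 2⁻¹ := by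
      intro n
      have h1 : ε ≤ mfun μt (D n) := iInf_le _ n
      have hsub : D n ⊆ K n ∪ (proj E R ⁻¹' (B \ C0) ∪
          ⋃ k ∈ Finset.range (n + 1), proj E (f k) ⁻¹' ((Bs k)ᶜ \ C k)) := by
        intro x hx
        by_cases hxK : x ∈ K n
        · exact Or.inl hxK
        · refine Or.inr ?_
          simp only [hK, Set.mem_inter_iff, Set.mem_iInter, not_and_or, not_forall] at hxK
          rcases hxK with hxC0 | hxCk
          · exact Or.inl ⟨hx.1, hxC0⟩
          · obtain ⟨k, hk, hxk⟩ := hxCk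
            refine Or.inr (Set.mem_biUnion hk ⟨?_, hxk⟩)
            intro hmem
            exact hx.2 (Set.mem_biUnion hk hmem)
      have h2 : mfun μt (D n) ≤ mfun μt (K n) + (μt R (B \ C0) +
          ∑ k ∈ Finset.range (n + 1), μt (f k) ((Bs k)ᶜ \ C k)) := by
        refine le_trans (mfun_mono μt hsub) ?_
        refine le_trans (mfun_union_le μt hcons _ _) (add_le_add_right ?_ _)
        refine le_trans (mfun_union_le μt hcons _ _) ?_
        refine add_le_add ?_ ?_
        · exact le_of_eq (mfun_cyl μt hcons (hB.diff hC0closed.measurableSet))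
        · refine le_trans (mfun_biUnion_le μt hcons _ _) ?_
          refine Finset.sum_le_sum fun k _ => ?_
          exact le_of_eq (mfun_cyl μt hcons (((hBs k).compl).diff (hCclosed k).measurableSet))
      have h3 : (∑ k ∈ Finset.range (n + 1), μt (f k) ((Bs k)ᶜ \ C k)) ≤ ε * 4⁻¹ := by
        refine le_trans (Finset.sum_le_sum fun k _ => (hCdef k).le) ?_
        refine le_trans (ENNReal.sum_le_tsum _) ?_
        rw [ENNReal.tsum_mul_left, geo3]
      calc ε ≤ mfun μt (D n) := h1
        _ ≤ mfun μt (K n) + (μt R (B \ C0) + ∑ k ∈ Finset.range (n + 1),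
              μt (f k) ((Bs k)ᶜ \ C k)) := h2
        _ ≤ mfun μt (K n) + (ε * 4⁻¹ + ε * 4⁻¹) := by
              refine add_le_add_right (add_le_add hC0.le h3) _
        _ = mfun μt (K n) + ε * 2⁻¹ := by
              rw [← mul_add]
              congr 2
              rw [← two_mul, show (4 : ℝ≥0∞) = 2 * 2 by norm_num,
                ENNReal.mul_inv (by norm_num) (by norm_num), ← mul_assoc,
                ENNReal.mul_inv_cancel (by norm_num) (by norm_num), one_mul]
    -- nonemptiness of the compact sets
    have hKne : ∀ n, (K n).Nonempty := by
      intro n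
      rcases Set.eq_empty_or_nonempty (K n) with h | h
      · exfalso
        have hle := hKest n
        rw [h, mfun_empty μt, zero_add] at hle
        have hlt : ε * 2⁻¹ < ε := by
          have h2 := ENNReal.half_lt_self hε0 hεtop
          rwa [ENNReal.div_eq_inv_mul, mul_comm] at h2
        exact absurd hle (not_le.mpr hlt)
      · exact h
    have hKclosed : ∀ n, IsClosed (K n) := fun n =>
      (hC0closed.preimage (continuous_proj R)).inter
        (isClosed_iInter fun k => isClosed_iInter fun _ =>
          (hCclosed k).preimage (continuous_proj (f k)))
    have hKdec : ∀ n, K (n + 1) ⊆ K n := by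
      intro n x hx
      refine ⟨hx.1, ?_⟩
      rw [Set.mem_iInter₂]
      intro k hk
      exact Set.mem_iInter₂.mp hx.2 k
        (Finset.mem_range.mpr (by have := Finset.mem_range.mp hk; omega))
    obtain ⟨x, hx⟩ := IsCompact.nonempty_iInter_of_sequence_nonempty_isCompact_isClosed K
      hKdec hKne ((hKclosed 0).isCompact) hKclosed
    rw [Set.mem_iInter] at hx
    have hx0 : x ∈ proj E R ⁻¹' B := hC0sub (hx 0).1
    obtain ⟨k, hk⟩ : ∃ k, x ∈ A k := by
      have := hcover hx0
      rwa [Set.mem_iUnion] at this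
    have hxk : x ∈ proj E (f k) ⁻¹' (C k) := by
      have h2 := (hx k).2
      rw [Set.mem_iInter₂] at h2
      exact h2 k (Finset.self_mem_range_succ k)
    exact (hCsub k hxk) hk
  -- main estimate
  have main : ∀ n, μt R B ≤ mfun μt (D n) + ∑' k, μt (f k) (Bs k) := by
    intro n
    have h0 : proj E R ⁻¹' B ⊆ D n ∪ ⋃ k ∈ Finset.range (n + 1), A k := by
      intro x hx
      by_cases hxU : x ∈ ⋃ k ∈ Finset.range (n + 1), A k
      · exact Or.inr hxU
      · exact Or.inl ⟨hx, hxU⟩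
    calc μt R B = mfun μt (proj E R ⁻¹' B) := (mfun_cyl μt hcons hB).symm
      _ ≤ mfun μt (D n) + mfun μt (⋃ k ∈ Finset.range (n + 1), A k) :=
          le_trans (mfun_mono μt h0) (mfun_union_le μt hcons _ _)
      _ ≤ mfun μt (D n) + ∑ k ∈ Finset.range (n + 1), mfun μt (A k) :=
          add_le_add_right (mfun_biUnion_le μt hcons _ _) _
      _ ≤ mfun μt (D n) + ∑' k, μt (f k) (Bs k) := by
          refine add_le_add_right ?_ _
          refine le_trans (Finset.sum_le_sum fun k _ =>
            (mfun_cyl μt hcons (hBs k)).le) ?_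
          exact ENNReal.sum_le_tsum _
  have final : μt R B ≤ (⨅ n, mfun μt (D n)) + ∑' k, μt (f k) (Bs k) := by
    rw [ENNReal.iInf_add]
    exact le_iInf main
  rwa [key, zero_add] at final

end Core

/-- The outer measure generated by the content. -/
noncomputable def limOuter : OuterMeasure (ℕ → E) :=
  OuterMeasure.ofFunction (mfun μt) (mfun_empty μt)

section Ext
include hcons

lemma outer_cyl (hfin : ∀ R, IsFiniteMeasure (μt R)) {R : ℕ} {B : Set (Fin (R + 1) → E)}
    (hB : MeasurableSet B) : limOuter μt (proj E R ⁻¹' B) = μt R B := by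
  refine le_antisymm (le_trans (OuterMeasure.ofFunction_le _) (mfun_cyl μt hcons hB).le) ?_
  rw [limOuter, OuterMeasure.ofFunction_apply]
  refine le_iInf fun t => le_iInf fun ht => ?_
  by_cases htop : (∑' n, mfun μt (t n)) = ∞
  · exact htop ▸ le_top
  refine ENNReal.le_of_forall_pos_le_add fun ε hε _ => ?_
  have hη : ∀ n : ℕ, ((ε : ℝ≥0∞) * 2⁻¹ ^ (n + 1)) ≠ 0 := fun n =>
    mul_ne_zero (by exact_mod_cast hε.ne') (pow_ne_zero _ (by norm_num))
  choose f Bs hBs hsub hval using fun n => exists_cyl_near μt hcons (t n) (hη n)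
  have hcover : proj E R ⁻¹' B ⊆ ⋃ n, proj E (f n) ⁻¹' (Bs n) :=
    ht.trans (Set.iUnion_mono hsub)
  have hmain := core_subadd μt hcons hfin hB f Bs hBs hcover
  refine le_trans hmain ?_
  calc (∑' n, μt (f n) (Bs n)) ≤ ∑' n, (mfun μt (t n) + ε * 2⁻¹ ^ (n + 1)) :=
        ENNReal.tsum_le_tsum fun n => hval n
    _ = (∑' n, mfun μt (t n)) + ε * ∑' n, (2⁻¹ : ℝ≥0∞) ^ (n + 1) := by
        rw [ENNReal.tsum_add, ENNReal.tsum_mul_left]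
    _ = (∑' n, mfun μt (t n)) + ε := by rw [geo1, mul_one]

lemma cyl_carath {R : ℕ} {B : Set (Fin (R + 1) → E)} (hB : MeasurableSet B) :
    (limOuter μt).caratheodory.MeasurableSet' (proj E R ⁻¹' B) := by
  refine OuterMeasure.ofFunction_caratheodory fun t => ?_
  conv_rhs => rw [mfun]
  refine le_iInf fun R' => le_iInf fun B' => le_iInf fun hB' => le_iInf fun hsub => ?_
  set S := max R' R
  set b' : Set (Fin (S + 1) → E) := restr (le_max_left R' R) ⁻¹' B' with hb'
  set b : Set (Fin (S + 1) → E) := restr (le_max_right R' R) ⁻¹' B with hb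
  have hSb' : proj E R' ⁻¹' B' = proj E S ⁻¹' b' := proj_preimage _ B'
  have hSb : proj E R ⁻¹' B = proj E S ⁻¹' b := proj_preimage _ B
  have h1 : t ∩ proj E R ⁻¹' B ⊆ proj E S ⁻¹' (b' ∩ b) := by
    rw [Set.preimage_inter, ← hSb', ← hSb]
    exact Set.inter_subset_inter_left _ hsub
  have h2 : t \ proj E R ⁻¹' B ⊆ proj E S ⁻¹' (b' \ b) := by
    rw [Set.preimage_diff, ← hSb', ← hSb]
    exact Set.diff_subset_diff_left hsub
  have hmb' : MeasurableSet b' := (measurable_restr _) hB'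
  have hmb : MeasurableSet b := (measurable_restr _) hB
  calc mfun μt (t ∩ proj E R ⁻¹' B) + mfun μt (t \ proj E R ⁻¹' B)
      ≤ μt S (b' ∩ b) + μt S (b' \ b) :=
        add_le_add (mfun_le μt (hmb'.inter hmb) h1) (mfun_le μt (hmb'.diff hmb) h2)
    _ = μt S b' := measure_inter_add_diff b' hmb
    _ = μt R' B' := restr_apply μt hcons _ hB'

theorem exists_prefix_extension (hfin : ∀ R, IsFiniteMeasure (μt R)) :
    ∃ ν : Measure (ℕ → E), ∀ R : ℕ, ν.map (proj E R) = μt R := by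
  have hcar : (inferInstance : MeasurableSpace (ℕ → E)) ≤ (limOuter μt).caratheodory := by
    rw [show (inferInstance : MeasurableSpace (ℕ → E)) =
      MeasurableSpace.pi from rfl, MeasurableSpace.pi]
    refine iSup_le fun j => ?_
    intro s hs
    obtain ⟨b, hb, rfl⟩ := hs
    have heq : (fun x : ℕ → E => x j) ⁻¹' b =
        proj E j ⁻¹' ((fun y : Fin (j + 1) → E => y ⟨j, Nat.lt_succ_self j⟩) ⁻¹' b) := rfl
    rw [heq]
    exact cyl_carath μt hcons ((measurable_pi_apply _) hb)
  refine ⟨(limOuter μt).toMeasure hcar, fun R => ?_⟩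
  refine Measure.ext fun B hB => ?_
  rw [Measure.map_apply (measurable_proj R) hB,
    toMeasure_apply _ _ ((measurable_proj R) hB)]
  exact outer_cyl μt hcons hfin hB

end Ext

end WithCons

end Stmt6Aux

namespace Stmt6Aux

noncomputable def dmap : EReal × EReal → ℂ := fun p => (p.1.toReal : ℂ) + (p.2.toReal : ℂ) * Complex.I

noncomputable def cmap : ℂ → EReal × EReal := fun z => ((z.re : EReal), (z.im : EReal))

lemma dmap_cmap (z : ℂ) : dmap (cmap z) = z := by
  simp [dmap, cmap, Complex.re_add_im]

lemma measurable_cmap : Measurable cmap :=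
  (measurable_coe_real_ereal.comp Complex.measurable_re).prodMk
    (measurable_coe_real_ereal.comp Complex.measurable_im)

lemma measurable_dmap : Measurable dmap := by
  refine Measurable.add ?_ (Measurable.mul ?_ measurable_const)
  · exact Complex.measurable_ofReal.comp (measurable_ereal_toReal.comp measurable_fst)
  · exact Complex.measurable_ofReal.comp (measurable_ereal_toReal.comp measurable_snd)

end Stmt6Aux


open Stmt6Aux

/-- Let `H` be a separable Hilbert space with orthonormal basis `(e_j)` and
`E_R = span{e_0,…,e_R}` (identified with `Fin (R+1) → ℂ` via coordinates in the basis).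
Let `(μ_R)` be a projective family of finite Borel measures of common total mass `m` on the
spaces `E_R` (pushforward under the orthogonal projection `E_S → E_R`, `R ≤ S`, i.e. under
restriction of coordinates, equals `μ_R`). If there are `δ > 0` and `K > 0` with the uniform
tail bound `μ_R {f : ‖f‖² ≥ r} ≤ K (1+r)^{−δ}` for all `R` and all `r ≥ 1`, then the
projective family extends to a (countably additive, finite) Borel measure `ν` on `H` whose
pushforward under the coordinate map onto `E_R` is `μ_R` for every `R`. -/
theorem stmt_6 {H : Type*} [NormedAddCommGroup H] [InnerProductSpace ℂ H] [CompleteSpace H]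
    [MeasurableSpace H] [BorelSpace H]
    (e : ℕ → H) (he : Orthonormal ℂ e)
    (hdense : Dense (Submodule.span ℂ (Set.range e) : Set H))
    (μ : (R : ℕ) → Measure (Fin (R + 1) → ℂ))
    (hfin : ∀ R, IsFiniteMeasure (μ R))
    (m : ENNReal) (hmass : ∀ R, μ R Set.univ = m)
    (hproj : ∀ R S : ℕ, (h : R ≤ S) →
      (μ S).map (fun x => fun i : Fin (R + 1) => x (Fin.castLE (Nat.succ_le_succ h) i)) = μ R)
    (δ K : ℝ) (hδ : 0 < δ) (hK : 0 < K)
    (htail : ∀ (R : ℕ) (r : ℝ), 1 ≤ r →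
      ((μ R) {x : Fin (R + 1) → ℂ | r ≤ ∑ i, ‖x i‖ ^ 2}).toReal ≤ K * (1 + r) ^ (-δ)) :
    ∃ ν : Measure H, IsFiniteMeasure ν ∧
      ∀ R : ℕ, ν.map (fun f => fun j : Fin (R + 1) => (inner ℂ (e j) f : ℂ)) = μ R := by
  classical
  -- `H` is second countable
  have hsep : TopologicalSpace.IsSeparable (Submodule.span ℂ (Set.range e) : Set H) :=
    (Set.countable_range e).isSeparable.span
  obtain ⟨c, hc_count, hc_sub⟩ := hsep
  haveI : TopologicalSpace.SeparableSpace H := by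
    refine ⟨⟨c, hc_count, ?_⟩⟩
    have h1 : closure (Submodule.span ℂ (Set.range e) : Set H) ⊆ closure c :=
      closure_minimal hc_sub isClosed_closure
    exact fun x => h1 (hdense x)
  haveI : SecondCountableTopology H := UniformSpace.secondCountable_of_separable H
  set E := EReal × EReal
  -- transported measures
  set cm : ∀ R : ℕ, (Fin (R + 1) → ℂ) → (Fin (R + 1) → E) :=
    fun R x i => cmap (x i) with hcm
  have hcm_meas : ∀ R, Measurable (cm R) := fun R =>
    measurable_pi_lambda _ fun i => measurable_cmap.comp (measurable_pi_apply i)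
  set μt : ∀ R : ℕ, Measure (Fin (R + 1) → E) := fun R => (μ R).map (cm R) with hμt
  have hfin' : ∀ R, IsFiniteMeasure (μt R) := by
    intro R
    haveI := hfin R
    constructor
    rw [hμt, Measure.map_apply (hcm_meas R) MeasurableSet.univ, Set.preimage_univ]
    exact measure_lt_top _ _
  have hconsE : ∀ R S : ℕ, (h : R ≤ S) → (μt S).map (restr (E := E) h) = μt R := by
    intro R S h
    have hrm : Measurable (fun x : Fin (S + 1) → ℂ =>
        fun i : Fin (R + 1) => x (Fin.castLE (Nat.succ_le_succ h) i)) :=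
      measurable_pi_lambda _ fun i => measurable_pi_apply _
    rw [hμt, Measure.map_map (measurable_restr h) (hcm_meas S)]
    have hco : restr (E := E) h ∘ cm S = cm R ∘ (fun x : Fin (S + 1) → ℂ =>
        fun i : Fin (R + 1) => x (Fin.castLE (Nat.succ_le_succ h) i)) := rfl
    rw [hco, ← Measure.map_map (hcm_meas R) hrm, hproj R S h]
  obtain ⟨νt, hνt⟩ := exists_prefix_extension μt hconsE hfin'
  -- complex coordinates
  set Z : (ℕ → E) → ℕ → ℂ := fun x j => dmap (x j) with hZdef
  have hZ : ∀ j, Measurable fun x => Z x j := fun j =>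
    measurable_dmap.comp (measurable_pi_apply j)
  -- the uniform tail bound, transported
  have tail : ∀ (R : ℕ) (r : ℝ), 1 ≤ r →
      νt {x | r ≤ ∑ i ∈ Finset.range (R + 1), ‖Z x i‖ ^ 2} ≤
        ENNReal.ofReal (K * (1 + r) ^ (-δ)) := by
    intro R r hr
    have hmE : MeasurableSet {y : Fin (R + 1) → E | r ≤ ∑ i, ‖dmap (y i)‖ ^ 2} :=
      measurableSet_le measurable_const (Finset.measurable_sum _ fun i _ =>
        ((measurable_dmap.comp (measurable_pi_apply i)).norm.pow_const 2))
    have hmC : MeasurableSet {x : Fin (R + 1) → ℂ | r ≤ ∑ i, ‖x i‖ ^ 2} :=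
      measurableSet_le measurable_const (Finset.measurable_sum _ fun i _ =>
        ((measurable_pi_apply i).norm.pow_const 2))
    have hset : {x : ℕ → E | r ≤ ∑ i ∈ Finset.range (R + 1), ‖Z x i‖ ^ 2} =
        proj E R ⁻¹' {y : Fin (R + 1) → E | r ≤ ∑ i, ‖dmap (y i)‖ ^ 2} := by
      ext x
      simp only [Set.mem_setOf_eq, Set.mem_preimage, proj]
      rw [Fin.sum_univ_eq_sum_range (fun i => ‖dmap (x i)‖ ^ 2) (R + 1)]
    rw [hset, ← Measure.map_apply (measurable_proj R) hmE, hνt R, hμt,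
      Measure.map_apply (hcm_meas R) hmE]
    have hpre : cm R ⁻¹' {y : Fin (R + 1) → E | r ≤ ∑ i, ‖dmap (y i)‖ ^ 2} =
        {x : Fin (R + 1) → ℂ | r ≤ ∑ i, ‖x i‖ ^ 2} := by
      ext x
      simp [hcm, dmap_cmap]
    rw [hpre]
    haveI := hfin R
    rw [← ENNReal.ofReal_toReal (measure_ne_top (μ R) _)]
    exact ENNReal.ofReal_le_ofReal (htail R r hr)
  -- the bad (non square-summable) set is null
  set Bad := {x : ℕ → E | ¬ Summable (fun j => ‖Z x j‖ ^ 2)} with hBad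
  have hBadnull : νt Bad = 0 := by
    have hb : ∀ n : ℕ, νt Bad ≤ ENNReal.ofReal (K * (1 + ((n : ℝ) + 1)) ^ (-δ)) := by
      intro n
      set s : ℕ → Set (ℕ → E) :=
        fun R => {x | ((n : ℝ) + 1) ≤ ∑ i ∈ Finset.range (R + 1), ‖Z x i‖ ^ 2} with hs
      have hsub : Bad ⊆ ⋃ R, s R := by
        intro x hx
        have hdiv := (not_summable_iff_tendsto_nat_atTop_of_nonneg
          (fun i => sq_nonneg ‖Z x i‖)).mp hx
        obtain ⟨M, hM⟩ := (hdiv.eventually_ge_atTop ((n : ℝ) + 1)).exists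
        refine Set.mem_iUnion.mpr ⟨M, ?_⟩
        refine le_trans hM (Finset.sum_le_sum_of_subset_of_nonneg
          (Finset.range_subset_range.mpr (by omega)) (fun i _ _ => sq_nonneg _))
      have hmono : Monotone s := by
        intro a b hab x hx
        simp only [hs, Set.mem_setOf_eq] at hx ⊢
        refine le_trans hx (Finset.sum_le_sum_of_subset_of_nonneg
          (Finset.range_subset_range.mpr (by omega)) ?_)
        intro i _ _
        exact sq_nonneg _
      refine le_trans (measure_mono hsub) ?_
      rw [(hmono.directed_le).measure_iUnion]
      exact iSup_le fun R => tail R ((n : ℝ) + 1) (by linarith [Nat.cast_nonneg (α := ℝ) n])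
    have hlim : Filter.Tendsto (fun n : ℕ => ENNReal.ofReal (K * (1 + ((n : ℝ) + 1)) ^ (-δ)))
        Filter.atTop (nhds 0) := by
      have h0 : (0 : ENNReal) = ENNReal.ofReal (K * 0) := by simp
      rw [h0]
      refine ENNReal.tendsto_ofReal ?_
      refine Filter.Tendsto.const_mul K ?_
      refine (tendsto_rpow_neg_atTop hδ).comp ?_
      refine Filter.tendsto_atTop_add_const_left _ 1 ?_
      exact Filter.tendsto_atTop_add_const_right _ 1 tendsto_natCast_atTop_atTop
    exact le_antisymm (ge_of_tendsto' hlim hb) zero_le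
  -- partial sums and their a.e. limit
  set F : ℕ → (ℕ → E) → H := fun n x => ∑ i ∈ Finset.range n, Z x i • e i with hF
  have hFmeas : ∀ n, Measurable (F n) := by
    intro n
    refine Finset.measurable_sum _ fun i _ => ?_
    exact ((continuous_id.smul continuous_const).measurable).comp (hZ i)
  have haecauchy : ∀ᵐ x ∂νt, ∃ l : H, Filter.Tendsto (fun n => F n x) Filter.atTop (nhds l) := by
    rw [MeasureTheory.ae_iff]
    refine measure_mono_null ?_ hBadnull
    intro x hx
    simp only [Set.mem_setOf_eq, not_exists] at hx
    simp only [hBad, Set.mem_setOf_eq]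
    intro hsum
    have hsum2 : Summable (fun j => Z x j • e j) := by
      have h2 := (he.orthogonalFamily.summable_iff_norm_sq_summable (fun j => Z x j)).mpr hsum
      simpa [LinearIsometry.toSpanSingleton_apply] using h2
    exact hx _ hsum2.hasSum.tendsto_sum_nat
  obtain ⟨T, hTmeas, hTtend⟩ := measurable_limit_of_tendsto_metrizable_ae
    (fun n => (hFmeas n).aemeasurable) haecauchy
  refine ⟨νt.map T, ?_, ?_⟩
  · constructor
    rw [Measure.map_apply hTmeas MeasurableSet.univ, Set.preimage_univ]
    have h0 : νt Set.univ = μt 0 Set.univ := by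
      rw [← hνt 0, Measure.map_apply (measurable_proj 0) MeasurableSet.univ,
        Set.preimage_univ]
    rw [h0]
    haveI := hfin' 0
    exact measure_lt_top _ _
  · intro R
    have hg : Measurable (fun f : H => fun j : Fin (R + 1) => (inner ℂ (e j) f : ℂ)) :=
      measurable_pi_lambda _ fun j => (innerSL ℂ (e (j : ℕ))).continuous.measurable
    rw [Measure.map_map hg hTmeas]
    have hae : (fun f : H => fun j : Fin (R + 1) => (inner ℂ (e j) f : ℂ)) ∘ T
        =ᵐ[νt] fun x => fun j : Fin (R + 1) => Z x (j : ℕ) := by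
      filter_upwards [hTtend] with x hx
      funext j
      simp only [Function.comp_apply]
      have hcont : Filter.Tendsto (fun n => (inner ℂ (e (j : ℕ)) (F n x) : ℂ)) Filter.atTop
          (nhds (inner ℂ (e (j : ℕ)) (T x))) :=
        ((innerSL ℂ (e (j : ℕ))).continuous.tendsto _).comp hx
      have heval : ∀ᶠ n in Filter.atTop, (inner ℂ (e (j : ℕ)) (F n x) : ℂ) = Z x (j : ℕ) := by
        filter_upwards [Filter.eventually_ge_atTop ((j : ℕ) + 1)] with n hn
        rw [hF]
        simp only
        rw [inner_sum]
        have hterm : ∀ i ∈ Finset.range n,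
            (inner ℂ (e (j : ℕ)) (Z x i • e i) : ℂ) = if (j : ℕ) = i then Z x i else 0 := by
          intro i _
          rw [inner_smul_right, orthonormal_iff_ite.mp he (j : ℕ) i]
          by_cases hji : (j : ℕ) = i <;> simp [hji]
        rw [Finset.sum_congr rfl hterm, Finset.sum_ite_eq (Finset.range n) ((j : ℕ))
          (fun i => Z x i), if_pos (Finset.mem_range.mpr (by omega))]
      have hconst : Filter.Tendsto (fun n => (inner ℂ (e (j : ℕ)) (F n x) : ℂ)) Filter.atTop
          (nhds (Z x (j : ℕ))) :=
        Filter.Tendsto.congr' (Filter.EventuallyEq.symm heval) tendsto_const_nhds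
      exact tendsto_nhds_unique hcont hconst
    rw [Measure.map_congr hae]
    have hdR : Measurable (fun y : Fin (R + 1) → E => fun j : Fin (R + 1) => dmap (y j)) :=
      measurable_pi_lambda _ fun j => measurable_dmap.comp (measurable_pi_apply _)
    have hco2 : (fun x : ℕ → E => fun j : Fin (R + 1) => Z x (j : ℕ)) =
        (fun y : Fin (R + 1) → E => fun j : Fin (R + 1) => dmap (y j)) ∘ proj E R := rfl
    rw [hco2, ← Measure.map_map hdR (measurable_proj R), hνt R, hμt,
      Measure.map_map hdR (hcm_meas R)]
    have hco3 : (fun y : Fin (R + 1) → E => fun j : Fin (R + 1) => dmap (y j)) ∘ cm R = id :=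
      funext fun x => funext fun j => dmap_cmap _
    rw [hco3, Measure.map_id]
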